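/- The number of Dyck paths of length 2(n+3) with a distinguished left asymmetric peak of weight 1 equals binom(2n+3, n). -/

import Mathlib

/-- A path (`true` = up step, `false` = down step) never goes below the x-axis. -/
def DyckNonneg (p : List Bool) : Prop :=
  ∀ q : List Bool, q <+: p → q.count false ≤ q.count true

/-- `p` is a Dyck path. -/
def IsDyck (p : List Bool) : Prop :=
  DyckNonneg p ∧ p.count true = p.count false

/-- Dyck paths of length `m` with a distinguished left asymmetric peak of weight 1:
a decomposition `A ++ u^a ++ [d] ++ B` with `a ≥ 2`, where the run `u^a` is maximal
(`A` does not end with an up step) and the run `d` is maximal (`B` does not start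
with a down step). -/
def LeftAsymPeak1Marked (m : ℕ) : Type :=
  { q : List Bool × ℕ × List Bool //
      2 ≤ q.2.1 ∧
      q.1.getLast? ≠ some true ∧
      q.2.2.head? ≠ some false ∧
      IsDyck (q.1 ++ List.replicate q.2.1 true ++ [false] ++ q.2.2) ∧
      (q.1 ++ List.replicate q.2.1 true ++ [false] ++ q.2.2).length = m }

namespace LAP

def val (l : List Bool) : ℤ := (l.count true : ℤ) - l.count false

lemma val_append (a b : List Bool) : val (a ++ b) = val a + val b := by
  simp [val, List.count_append]; ring

lemma val_nil : val [] = 0 := rfl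

lemma val_cons (b : Bool) (l : List Bool) :
    val (b :: l) = (if b then 1 else -1) + val l := by
  cases b <;> simp [val, List.count_cons] <;> ring

lemma count_add (l : List Bool) : l.count true + l.count false = l.length := by
  induction l with
  | nil => simp
  | cons a l ih => cases a <;> simp [List.count_cons] <;> omega

lemma dyckNonneg_iff (p : List Bool) : DyckNonneg p ↔ ∀ q, q <+: p → 0 ≤ val q := by
  unfold DyckNonneg val
  constructor <;> intro h q hq <;> have := h q hq <;> omega

def rc (l : List Bool) : List Bool := (l.map not).reverse

lemma rc_rc (l : List Bool) : rc (rc l) = l := by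
  simp [rc, List.map_reverse, List.map_map, Function.comp_def]

lemma rc_append (a b : List Bool) : rc (a ++ b) = rc b ++ rc a := by
  simp [rc]

lemma count_map_not (l : List Bool) (b : Bool) : (l.map not).count b = l.count !b := by
  induction l with
  | nil => simp
  | cons a l ih => cases a <;> cases b <;> simp_all [List.count_cons]

lemma val_rc (l : List Bool) : val (rc l) = - val l := by
  simp [val, rc, List.count_reverse, count_map_not]

lemma length_rc (l : List Bool) : (rc l).length = l.length := by simp [rc]

lemma rc_suffix (p m : List Bool) (h : p <+: m) : rc p <:+ rc m := by
  obtain ⟨r, rfl⟩ := h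
  exact ⟨rc r, (rc_append _ _).symm⟩

lemma rc_prefix (p m : List Bool) (h : p <:+ m) : rc p <+: rc m := by
  obtain ⟨r, rfl⟩ := h
  exact ⟨rc r, (rc_append _ _).symm⟩

lemma prefix_rc (q l : List Bool) (h : q <+: rc l) : ∃ s, s <:+ l ∧ q = rc s := by
  refine ⟨rc q, ?_, (rc_rc q).symm⟩
  have := rc_suffix _ _ h
  rwa [rc_rc] at this

lemma prefix_append_cases {q l₁ l₂ : List Bool} (h : q <+: l₁ ++ l₂) :
    q <+: l₁ ∨ ∃ s, s <+: l₂ ∧ q = l₁ ++ s := by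
  induction l₁ generalizing q with
  | nil => exact Or.inr ⟨q, by simpa using h, by simp⟩
  | cons a l ih =>
    cases q with
    | nil => exact Or.inl List.nil_prefix
    | cons b q' =>
      rw [List.cons_append, List.cons_prefix_cons] at h
      obtain ⟨rfl, h⟩ := h
      rcases ih h with h1 | ⟨s, hs, rfl⟩
      · exact Or.inl (List.cons_prefix_cons.mpr ⟨rfl, h1⟩)
      · exact Or.inr ⟨s, hs, rfl⟩

lemma prefix_cons_cases {q : List Bool} {a : Bool} {l : List Bool} (h : q <+: a :: l) :
    q = [] ∨ ∃ q', q = a :: q' ∧ q' <+: l := by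
  rcases prefix_append_cases (l₁ := [a]) (l₂ := l) h with h1 | ⟨s, hs, rfl⟩
  · cases q with
    | nil => exact Or.inl rfl
    | cons b q' =>
      rw [List.cons_prefix_cons] at h1
      obtain ⟨rfl, h1⟩ := h1
      simp at h1
      exact Or.inr ⟨q', by simp [h1], by simp [h1]⟩
  · exact Or.inr ⟨s, rfl, hs⟩

lemma suffix_val {s l : List Bool} (h : s <:+ l) :
    ∃ t, t <+: l ∧ val l = val t + val s := by
  obtain ⟨t, rfl⟩ := h
  exact ⟨t, ⟨s, rfl⟩, val_append t s⟩

def Good (w P Q : List Bool) : Prop :=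
  w = P ++ true :: Q ∧ (∀ q, q <+: P → val P ≤ val q) ∧ DyckNonneg Q

theorem good_exists (w : List Bool) (h : ∃ q, q <+: w ∧ val q < val w) :
    ∃ P Q, Good w P Q := by
  induction w with
  | nil =>
    obtain ⟨q, hq, hlt⟩ := h
    rw [List.prefix_nil.mp hq] at hlt
    exact absurd hlt (lt_irrefl _)
  | cons b w' ih =>
    by_cases hb : b = true ∧ DyckNonneg w'
    · refine ⟨[], w', by simp [Good, hb.1], ?_, hb.2⟩
      intro q hq
      rw [List.prefix_nil.mp hq]
    · have hex' : ∃ q, q <+: w' ∧ val q < val w' := by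
        obtain ⟨q, hq, hlt⟩ := h
        rw [val_cons] at hlt
        cases b with
        | false =>
          rcases prefix_cons_cases hq with rfl | ⟨q', rfl, hq'⟩
          · exact ⟨[], List.nil_prefix, by simp [val_nil] at hlt ⊢; omega⟩
          · rw [val_cons] at hlt
            exact ⟨q', hq', by simp at hlt ⊢; omega⟩
        | true =>
          have hnd : ¬ DyckNonneg w' := fun hd => hb ⟨rfl, hd⟩
          rcases prefix_cons_cases hq with rfl | ⟨q', rfl, hq'⟩
          · rw [dyckNonneg_iff] at hnd
            push_neg at hnd
            obtain ⟨r, hr, hrneg⟩ := hnd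
            refine ⟨r, hr, ?_⟩
            simp [val_nil] at hlt
            omega
          · rw [val_cons] at hlt
            exact ⟨q', hq', by simp at hlt ⊢; omega⟩
      obtain ⟨P', Q', h1, h2, h3⟩ := ih hex'
      refine ⟨b :: P', Q', by rw [h1]; rfl, ?_, h3⟩
      have hP'0 : val P' ≤ 0 := by simpa [val_nil] using h2 [] List.nil_prefix
      have hkey : val (b :: P') ≤ 0 := by
        rw [val_cons]
        cases b with
        | false => simp only [Bool.false_eq_true, if_false]; omega
        | true =>
          have hnd : ¬ DyckNonneg w' := fun hd => hb ⟨rfl, hd⟩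
          simp only [if_pos rfl]
          by_contra hcon
          push_neg at hcon
          have hP'nn : 0 ≤ val P' := by omega
          apply hnd
          rw [dyckNonneg_iff]
          intro q hq
          rw [h1] at hq
          rcases prefix_append_cases hq with h4 | ⟨s, hs, rfl⟩
          · calc (0:ℤ) ≤ val P' := hP'nn
              _ ≤ val q := h2 q h4
          · rcases prefix_cons_cases hs with rfl | ⟨s', rfl, hs'⟩
            · simpa [val_append] using hP'nn
            · have : 0 ≤ val s' := (dyckNonneg_iff Q').mp h3 s' hs'
              rw [val_append, val_cons]
              simp
              omega
      intro q hq
      rcases prefix_cons_cases hq with rfl | ⟨q', rfl, hq'⟩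
      · simpa [val_nil] using hkey
      · rw [val_cons, val_cons]
        have := h2 q' hq'
        cases b <;> simp <;> omega

theorem good_unique {w P₁ Q₁ P₂ Q₂ : List Bool} (h₁ : Good w P₁ Q₁) (h₂ : Good w P₂ Q₂) :
    P₁ = P₂ ∧ Q₁ = Q₂ := by
  obtain ⟨e₁, a₁, d₁⟩ := h₁
  obtain ⟨e₂, a₂, d₂⟩ := h₂
  have key : ∀ X₁ Y₁ X₂ Y₂ : List Bool, X₁ ++ true :: Y₁ = X₂ ++ true :: Y₂ →
      (∀ q, q <+: X₁ → val X₁ ≤ val q) → DyckNonneg Y₁ →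
      (∀ q, q <+: X₂ → val X₂ ≤ val q) → X₁.length ≤ X₂.length → X₁ = X₂ := by
    intro X₁ Y₁ X₂ Y₂ he ha₁ hd₁ ha₂ hlen
    have hp₁ : X₁ <+: X₁ ++ true :: Y₁ := ⟨true :: Y₁, rfl⟩
    have hp₂ : X₂ <+: X₁ ++ true :: Y₁ := ⟨true :: Y₂, by rw [he]⟩
    have hpre : X₁ <+: X₂ := List.prefix_of_prefix_length_le hp₁ hp₂ hlen
    obtain ⟨S, rfl⟩ := hpre
    rw [List.append_assoc] at he
    have he' : true :: Y₁ = S ++ true :: Y₂ := List.append_cancel_left he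
    cases S with
    | nil => simp
    | cons s S' =>
      rw [List.cons_append, List.cons.injEq] at he'
      obtain ⟨rfl, rfl⟩ := he'
      have hS' : 0 ≤ val S' := (dyckNonneg_iff _).mp hd₁ S' ⟨true :: Y₂, rfl⟩
      have := ha₂ X₁ ⟨true :: S', rfl⟩
      rw [val_append, val_cons] at this
      simp at this
      omega
  rw [e₁] at e₂
  have hP : P₁ = P₂ := by
    rcases le_total P₁.length P₂.length with hl | hl
    · exact key P₁ Q₁ P₂ Q₂ e₂ a₁ d₁ a₂ hl
    · exact (key P₂ Q₂ P₁ Q₁ e₂.symm a₂ d₂ a₁ hl).symm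
  subst hP
  refine ⟨rfl, ?_⟩
  have := List.append_cancel_left e₂
  simpa using this


lemma rep_unique : ∀ (k₁ k₂ : ℕ) (r₁ r₂ : List Bool),
    List.replicate k₁ true ++ r₁ = List.replicate k₂ true ++ r₂ →
    r₁.head? ≠ some true → r₂.head? ≠ some true → k₁ = k₂ ∧ r₁ = r₂ := by
  intro k₁
  induction k₁ with
  | zero =>
    intro k₂ r₁ r₂ h h₁ h₂
    cases k₂ with
    | zero => exact ⟨rfl, by simpa using h⟩
    | succ k₂ =>
      rw [List.replicate_succ, List.cons_append] at h
      simp only [List.replicate_zero, List.nil_append] at h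
      exact absurd (by rw [h]; rfl) h₁
  | succ k₁ ih =>
    intro k₂ r₁ r₂ h h₁ h₂
    cases k₂ with
    | zero =>
      rw [List.replicate_succ, List.cons_append] at h
      simp only [List.replicate_zero, List.nil_append] at h
      exact absurd (by rw [← h]; rfl) h₂
    | succ k₂ =>
      rw [List.replicate_succ, List.replicate_succ, List.cons_append, List.cons_append,
        List.cons.injEq] at h
      obtain ⟨hk, hr⟩ := ih k₂ r₁ r₂ h.2 h₁ h₂
      exact ⟨by omega, hr⟩

lemma strip_unique {A₁ A₂ : List Bool} {k₁ k₂ : ℕ}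
    (h : A₁ ++ List.replicate k₁ true = A₂ ++ List.replicate k₂ true)
    (h₁ : A₁.getLast? ≠ some true) (h₂ : A₂.getLast? ≠ some true) :
    A₁ = A₂ ∧ k₁ = k₂ := by
  have hr := congrArg List.reverse h
  rw [List.reverse_append, List.reverse_append, List.reverse_replicate,
    List.reverse_replicate] at hr
  have e₁ : A₁.reverse.head? ≠ some true := by rwa [List.head?_reverse]
  have e₂ : A₂.reverse.head? ≠ some true := by rwa [List.head?_reverse]
  obtain ⟨hk, hA⟩ := rep_unique k₁ k₂ _ _ hr e₁ e₂
  exact ⟨by rw [← List.reverse_reverse A₁, hA, List.reverse_reverse], hk⟩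

lemma head?_dropWhile_id : ∀ l : List Bool, (l.dropWhile id).head? ≠ some true := by
  intro l
  induction l with
  | nil => simp
  | cons a l ih =>
    cases a
    · simp [List.dropWhile_cons]
    · simpa [List.dropWhile_cons] using ih

lemma B_cons {A : List Bool} {a : ℕ} {B : List Bool} (h2 : 2 ≤ a)
    (hB : B.head? ≠ some false)
    (hd : IsDyck (A ++ List.replicate a true ++ [false] ++ B)) :
    B = true :: B.tail := by
  have hne : B ≠ [] := by
    rintro rfl
    obtain ⟨hnn, hbal⟩ := hd
    have h1 := hnn A ⟨List.replicate a true ++ ([false] ++ []), by simp⟩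
    simp [List.count_append, List.count_replicate] at hbal
    omega
  obtain ⟨c, t, rfl⟩ := List.exists_cons_of_ne_nil hne
  cases c
  · simp at hB
  · rfl

lemma full_eq {A : List Bool} {a : ℕ} {B B' : List Bool} (h2 : 2 ≤ a)
    (hBc : B = true :: B') :
    A ++ List.replicate a true ++ [false] ++ B =
      (A ++ List.replicate (a - 2) true) ++ (true :: true :: false :: true :: B') := by
  obtain ⟨k, rfl⟩ : ∃ k, a = k + 2 := ⟨a - 2, by omega⟩
  subst hBc
  have : k + 2 - 2 = k := by omega
  rw [this, List.replicate_add]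
  simp [List.replicate_succ, List.append_assoc]

def toWord (A : List Bool) (a : ℕ) (B : List Bool) : List Bool :=
  rc (A ++ List.replicate (a - 2) true) ++ true :: rc B.tail

lemma toWord_good {A : List Bool} {a : ℕ} {B : List Bool} (h2 : 2 ≤ a)
    (hB : B.head? ≠ some false)
    (hd : IsDyck (A ++ List.replicate a true ++ [false] ++ B)) :
    Good (toWord A a B) (rc (A ++ List.replicate (a - 2) true)) (rc B.tail) := by
  have hBc := B_cons h2 hB hd
  have hfull := full_eq (A := A) (B' := B.tail) h2 hBc
  set X := A ++ List.replicate (a - 2) true with hX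
  set F := A ++ List.replicate a true ++ [false] ++ B with hF
  refine ⟨rfl, ?_, ?_⟩
  · intro q hq
    obtain ⟨s, hs, rfl⟩ := prefix_rc q X hq
    obtain ⟨t, ht, hv⟩ := suffix_val hs
    have hXF : X <+: F := ⟨true :: true :: false :: true :: B.tail, hfull.symm⟩
    have h0 := (dyckNonneg_iff F).mp hd.1 t (ht.trans hXF)
    rw [val_rc, val_rc]
    omega
  · rw [dyckNonneg_iff]
    intro q hq
    obtain ⟨s, hs, rfl⟩ := prefix_rc q _ hq
    have hBF : B.tail <:+ F := ⟨X ++ [true, true, false, true], by rw [hfull]; simp⟩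
    obtain ⟨t, ht, hv⟩ := suffix_val (hs.trans hBF)
    have h0 := (dyckNonneg_iff F).mp hd.1 t ht
    have hvF : val F = 0 := by simp [val, hd.2]
    rw [val_rc]
    omega

lemma toWord_spec {n : ℕ} {A : List Bool} {a : ℕ} {B : List Bool} (h2 : 2 ≤ a)
    (hB : B.head? ≠ some false)
    (hd : IsDyck (A ++ List.replicate a true ++ [false] ++ B))
    (hl : (A ++ List.replicate a true ++ [false] ++ B).length = 2 * (n + 3)) :
    (toWord A a B).length = 2 * n + 3 ∧ (toWord A a B).count false = n := by
  have hBc := B_cons h2 hB hd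
  have hfull := full_eq (A := A) (B' := B.tail) h2 hBc
  set X := A ++ List.replicate (a - 2) true with hX
  have hFlen : (X ++ (true :: true :: false :: true :: B.tail)).length = 2 * (n + 3) := by
    rw [← hfull]; exact hl
  simp only [List.length_append, List.length_cons] at hFlen
  have hlen : (toWord A a B).length = 2 * n + 3 := by
    simp only [toWord, List.length_append, List.length_cons, length_rc, ← hX]
    omega
  refine ⟨hlen, ?_⟩
  have hvF : val (X ++ (true :: true :: false :: true :: B.tail)) = 0 := by
    rw [← hfull]
    unfold val
    rw [hd.2]
    ring
  rw [val_append, val_cons, val_cons, val_cons, val_cons] at hvF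
  simp only [reduceIte, Bool.false_eq_true, if_false] at hvF
  have hvW : val (toWord A a B) = 3 := by
    simp only [toWord, val_append, val_cons, val_rc, ← hX]
    simp only [reduceIte, Bool.false_eq_true, if_false]
    omega
  have hca := count_add (toWord A a B)
  rw [hlen] at hca
  unfold val at hvW
  omega


lemma count_eq_of_val {l : List Bool} (h : val l = 0) : l.count true = l.count false := by
  unfold val at h; omega

def Phi (n : ℕ) (o : LeftAsymPeak1Marked (2 * (n + 3))) :
    {w : List Bool // w.length = 2 * n + 3 ∧ w.count false = n} :=
  ⟨toWord o.val.1 o.val.2.1 o.val.2.2,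
   toWord_spec o.prop.1 o.prop.2.2.1 o.prop.2.2.2.1 o.prop.2.2.2.2⟩

theorem phi_inj (n : ℕ) : Function.Injective (Phi n) := by
  rintro ⟨⟨A₁, a₁, B₁⟩, h2₁, hA₁, hB₁, hd₁, hl₁⟩ ⟨⟨A₂, a₂, B₂⟩, h2₂, hA₂, hB₂, hd₂, hl₂⟩ h
  simp only [Phi, Subtype.mk.injEq] at h
  dsimp only at h2₁ hA₁ hB₁ hd₁ hl₁ h2₂ hA₂ hB₂ hd₂ hl₂ h
  have g₁ := toWord_good h2₁ hB₁ hd₁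
  have g₂ := toWord_good h2₂ hB₂ hd₂
  rw [h] at g₁
  obtain ⟨hP, hQ⟩ := good_unique g₁ g₂
  have hX : A₁ ++ List.replicate (a₁ - 2) true = A₂ ++ List.replicate (a₂ - 2) true := by
    have := congrArg rc hP; rwa [rc_rc, rc_rc] at this
  have hT : B₁.tail = B₂.tail := by
    have := congrArg rc hQ; rwa [rc_rc, rc_rc] at this
  obtain ⟨hAeq, hkeq⟩ := strip_unique hX hA₁ hA₂
  have hBeq : B₁ = B₂ := by rw [B_cons h2₁ hB₁ hd₁, B_cons h2₂ hB₂ hd₂, hT]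
  apply Subtype.ext
  exact congrArg₂ Prod.mk hAeq (congrArg₂ Prod.mk (by omega) hBeq)

theorem phi_surj (n : ℕ) : Function.Surjective (Phi n) := by
  rintro ⟨w, hlen, hcnt⟩
  have hca := count_add w
  rw [hlen] at hca
  have hval : val w = 3 := by unfold val; omega
  obtain ⟨P, Q, good⟩ := good_exists w ⟨[], List.nil_prefix, by simp [val_nil, hval]⟩
  obtain ⟨heq, hmin, hdQ⟩ := good
  have hvP0 : val P ≤ 0 := by simpa [val_nil] using hmin [] List.nil_prefix
  have hvw : val P + 1 + val Q = 3 := by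
    rw [heq, val_append, val_cons] at hval
    simp only [reduceIte] at hval
    omega
  set k := ((rc P).reverse.takeWhile id).length with hk
  set A := ((rc P).reverse.dropWhile id).reverse with hA
  have htw : (rc P).reverse.takeWhile id = List.replicate k true := by
    rw [hk]
    apply List.eq_replicate_of_mem
    intro b hb
    have := List.mem_takeWhile_imp hb
    simpa using this
  have hXA : rc P = A ++ List.replicate k true := by
    calc rc P = (rc P).reverse.reverse := (List.reverse_reverse _).symm
      _ = ((rc P).reverse.takeWhile id ++ (rc P).reverse.dropWhile id).reverse := by
          rw [List.takeWhile_append_dropWhile]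
      _ = ((rc P).reverse.dropWhile id).reverse ++ ((rc P).reverse.takeWhile id).reverse := by
          rw [List.reverse_append]
      _ = A ++ List.replicate k true := by rw [htw, List.reverse_replicate, hA]
  have hAlast : A.getLast? ≠ some true := by
    rw [hA, List.getLast?_reverse]
    exact head?_dropWhile_id _
  have hks : k + 2 - 2 = k := by omega
  have hfull := full_eq (A := A) (a := k + 2) (B := true :: rc Q) (B' := rc Q)
    (by omega) rfl
  rw [hks, ← hXA] at hfull
  -- value facts
  have hvX : val (rc P) = - val P := val_rc P
  have hvF : val (A ++ List.replicate (k + 2) true ++ [false] ++ (true :: rc Q)) = 0 := by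
    rw [hfull, val_append, val_cons, val_cons, val_cons, val_cons, val_rc, val_rc]
    simp only [reduceIte, Bool.false_eq_true, if_false]
    omega
  -- nonnegativity
  have hnn : DyckNonneg (A ++ List.replicate (k + 2) true ++ [false] ++ (true :: rc Q)) := by
    rw [dyckNonneg_iff]
    intro q hq
    rw [hfull] at hq
    rcases prefix_append_cases hq with hq1 | ⟨r, hr, rfl⟩
    · obtain ⟨s, hs, rfl⟩ := prefix_rc q P hq1
      obtain ⟨t, ht, hv⟩ := suffix_val hs
      have := hmin t ht
      rw [val_rc]
      omega
    · rcases prefix_cons_cases hr with rfl | ⟨r1, rfl, hr1⟩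
      · rw [val_append, val_nil, val_rc]; omega
      · rcases prefix_cons_cases hr1 with rfl | ⟨r2, rfl, hr2⟩
        · rw [val_append, val_cons, val_nil, val_rc]
          simp only [reduceIte]
          omega
        · rcases prefix_cons_cases hr2 with rfl | ⟨r3, rfl, hr3⟩
          · rw [val_append, val_cons, val_cons, val_nil, val_rc]
            simp only [reduceIte]
            omega
          · rcases prefix_cons_cases hr3 with rfl | ⟨r4, rfl, hr4⟩
            · rw [val_append, val_cons, val_cons, val_cons, val_nil, val_rc]
              simp only [reduceIte, Bool.false_eq_true, if_false]
              omega
            · obtain ⟨s, hs, rfl⟩ := prefix_rc r4 Q hr4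
              obtain ⟨t, ht, hv⟩ := suffix_val hs
              have h0t := (dyckNonneg_iff Q).mp hdQ t ht
              rw [val_append, val_cons, val_cons, val_cons, val_cons, val_rc, val_rc]
              simp only [reduceIte, Bool.false_eq_true, if_false]
              omega
  -- lengths
  have hwlen : P.length + 1 + Q.length = 2 * n + 3 := by
    rw [heq] at hlen
    simp only [List.length_append, List.length_cons] at hlen
    omega
  have hFlen : (A ++ List.replicate (k + 2) true ++ [false] ++ (true :: rc Q)).length
      = 2 * (n + 3) := by
    rw [hfull]
    have h3 : P.length = A.length + k := by
      have := congrArg List.length hXA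
      simpa [length_rc, List.length_append, List.length_replicate] using this
    have h2 : (rc Q).length = Q.length := length_rc Q
    simp only [List.length_append, List.length_cons, List.length_replicate, h2, length_rc]
    omega
  refine ⟨⟨(A, k + 2, true :: rc Q), Nat.le_add_left 2 k, hAlast, by simp, ⟨hnn, count_eq_of_val hvF⟩,
    hFlen⟩, ?_⟩
  apply Subtype.ext
  show toWord A (k + 2) (true :: rc Q) = w
  rw [toWord, hks, ← hXA, List.tail_cons, rc_rc, rc_rc, ← heq]

theorem main_card (n : ℕ) :
    Nat.card (LeftAsymPeak1Marked (2 * (n + 3))) =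
      Nat.card {w : List Bool // w.length = 2 * n + 3 ∧ w.count false = n} :=
  Nat.card_eq_of_bijective (Phi n) ⟨phi_inj n, phi_surj n⟩




instance finiteWords (L : ℕ) (Pr : List Bool → Prop) :
    Finite {w : List Bool // w.length = L ∧ Pr w} := by
  refine Finite.of_injective (fun w => (fun i : Fin L => w.val.getD i true)) ?_
  rintro ⟨w₁, h₁, p₁⟩ ⟨w₂, h₂, p₂⟩ h
  ext1
  dsimp at h ⊢
  apply List.ext_getElem (by omega)
  intro i hi1 hi2
  have := congrFun h ⟨i, by omega⟩
  simpa [List.getD_eq_getElem?_getD, List.getElem?_eq_getElem, hi1, hi2] using this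

lemma all_true_of_count (w : List Bool) (p : w.count false = 0) :
    w = List.replicate w.length true := by
  apply List.eq_replicate_of_mem
  intro b hb
  cases b
  · exact absurd (List.count_eq_zero.mp p hb) (fun h => h)
  · rfl

lemma card_words_zero (L : ℕ) :
    Nat.card {w : List Bool // w.length = L ∧ w.count false = 0} = 1 := by
  rw [Nat.card_eq_one_iff_unique]
  constructor
  · constructor
    rintro ⟨w₁, h₁, p₁⟩ ⟨w₂, h₂, p₂⟩
    have e₁ := all_true_of_count w₁ p₁
    have e₂ := all_true_of_count w₂ p₂
    rw [h₁] at e₁; rw [h₂] at e₂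
    exact Subtype.ext (e₁.trans e₂.symm)
  · exact ⟨⟨List.replicate L true, by simp [List.count_replicate]⟩⟩

def consEquiv (L k : ℕ) :
    {w : List Bool // w.length = L + 1 ∧ w.count false = k + 1} ≃
    ({w : List Bool // w.length = L ∧ w.count false = k + 1} ⊕
     {w : List Bool // w.length = L ∧ w.count false = k}) where
  toFun := fun ⟨w, hw⟩ => match w, hw with
    | true :: t, h => Sum.inl ⟨t, by
        simp only [List.length_cons, List.count_cons] at h ⊢
        constructor
        · omega
        · have := h.2; simpa using this⟩
    | false :: t, h => Sum.inr ⟨t, by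
        simp only [List.length_cons, List.count_cons] at h ⊢
        constructor
        · omega
        · have := h.2; simp at this; omega⟩
  invFun := fun s => match s with
    | Sum.inl ⟨t, h⟩ => ⟨true :: t, by simp [List.count_cons, h.1, h.2]⟩
    | Sum.inr ⟨t, h⟩ => ⟨false :: t, by simp [List.count_cons, h.1, h.2]⟩
  left_inv := fun ⟨w, hw⟩ => by
    match w, hw with
    | true :: t, h => rfl
    | false :: t, h => rfl
  right_inv := fun s => by rcases s with ⟨t, h⟩ | ⟨t, h⟩ <;> rfl

theorem card_words : ∀ (L k : ℕ),
    Nat.card {w : List Bool // w.length = L ∧ w.count false = k} = Nat.choose L k := by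
  intro L
  induction L with
  | zero =>
    intro k
    cases k with
    | zero => simpa using card_words_zero 0
    | succ k =>
      have : IsEmpty {w : List Bool // w.length = 0 ∧ w.count false = k + 1} := by
        constructor
        rintro ⟨w, h1, h2⟩
        rw [List.length_eq_zero_iff.mp h1] at h2
        simp at h2
      rw [Nat.card_of_isEmpty]; simp
  | succ L ih =>
    intro k
    cases k with
    | zero => simpa using card_words_zero (L + 1)
    | succ k =>
      rw [Nat.card_congr (consEquiv L k), Nat.card_sum, ih (k + 1), ih k,
        Nat.choose_succ_succ]
      simp [Nat.succ_eq_add_one]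
      omega
end LAP

/-- The number of Dyck paths of length 2(n+3) with a distinguished left asymmetric
peak of weight 1 equals binom(2n+3, n). -/
theorem left_asym_peak_count (n : ℕ) :
    Nat.card (LeftAsymPeak1Marked (2 * (n + 3))) = Nat.choose (2 * n + 3) n := by
  rw [LAP.main_card n]
  exact LAP.card_words (2 * n + 3) n
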